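/- Let φ = (1 + √5)/2 and let ICOS ⊂ ℝ³ be the 30-point icosidodecahedron vertex set. There exists a map q : ICOS → ℤ such that q(p) ∈ {-4,-3,-2,-1,1,2,3,4} for every p ∈ ICOS, q(-p) = -q(p) for every p ∈ ICOS, and q(a) + q(b) + q(c) = 0 for all a, b, c ∈ ICOS with a + b + c = 0. (That is, the icosidodecahedron configuration admits a nowhere-zero 5-flow labeling, corresponding to a nowhere-zero 5-flow on the Petersen graph.) -/

import Mathlib

local notation "⟪" x ", " y "⟫" => @inner ℝ _ _ x y

noncomputable abbrev pt (a b c : ℝ) : EuclideanSpace ℝ (Fin 3) := WithLp.toLp 2 ![a, b, c]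

noncomputable def phi : ℝ := (1 + Real.sqrt 5) / 2

/-- The 30 vertices of the icosidodecahedron: all even (cyclic) coordinate
permutations of `(0, 0, ±1)` and `(±(φ-1)/2, ±1/2, ±φ/2)`. -/
def ICOS : Set (EuclideanSpace ℝ (Fin 3)) :=
  {x | (∃ s ∈ ({1, -1} : Set ℝ),
          x = pt 0 0 s ∨ x = pt 0 s 0 ∨ x = pt s 0 0) ∨
       (∃ s₁ ∈ ({1, -1} : Set ℝ), ∃ s₂ ∈ ({1, -1} : Set ℝ), ∃ s₃ ∈ ({1, -1} : Set ℝ),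
          x = pt (s₁ * ((phi - 1) / 2)) (s₂ * (1 / 2)) (s₃ * (phi / 2)) ∨
          x = pt (s₂ * (1 / 2)) (s₃ * (phi / 2)) (s₁ * ((phi - 1) / 2)) ∨
          x = pt (s₃ * (phi / 2)) (s₁ * ((phi - 1) / 2)) (s₂ * (1 / 2)))}

/-- The rational linear functional on the `(u, v)` integer coordinates
(where `xᵢ = (uᵢ + vᵢ φ)/2`) defining the flow. -/
def icosVal (u v : Fin 3 → ℤ) : ℚ :=
  2 * u 0 + 2 * u 1 + u 2 + (3/2) * v 0 + (1/2) * v 1 + (1/2) * v 2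

lemma phi_irrational : Irrational phi := Real.goldenRatio_irrational

/-- `1, φ` are linearly independent over `ℚ`. -/
lemma phi_indep (U V : ℤ) (h : (U : ℝ) + V * phi = 0) : U = 0 ∧ V = 0 := by
  have hV : V = 0 := by
    by_contra hV
    have hVr : (V : ℝ) ≠ 0 := Int.cast_ne_zero.mpr hV
    have : phi = (((-U / V : ℚ)) : ℝ) := by
      push_cast
      field_simp
      linarith
    exact phi_irrational ⟨_, this.symm⟩
  refine ⟨?_, hV⟩
  have : (U : ℝ) = 0 := by
    rw [hV] at h; push_cast at h; linarith
  exact_mod_cast this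

open Classical in
/-- The flow labeling. -/
noncomputable def icosQ (x : EuclideanSpace ℝ (Fin 3)) : ℤ :=
  if h : ∃ u v : Fin 3 → ℤ, ∀ i, x i = (u i + v i * phi) / 2 then
    round (icosVal h.choose h.choose_spec.choose)
  else 0

lemma icosQ_eq (x : EuclideanSpace ℝ (Fin 3)) (u v : Fin 3 → ℤ) (m : ℤ)
    (hx : ∀ i, x i = (u i + v i * phi) / 2) (hm : icosVal u v = m) :
    icosQ x = m := by
  have h : ∃ u v : Fin 3 → ℤ, ∀ i, x i = (u i + v i * phi) / 2 := ⟨u, v, hx⟩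
  rw [icosQ, dif_pos h]
  have hx' := h.choose_spec.choose_spec
  have huv : ∀ i, h.choose i = u i ∧ h.choose_spec.choose i = v i := by
    intro i
    have h1 := hx i
    have h2 := hx' i
    have : ((u i - h.choose i : ℤ) : ℝ) + ((v i - h.choose_spec.choose i : ℤ) : ℝ) * phi = 0 := by
      push_cast
      linarith [h1, h2]
    have := phi_indep _ _ this
    omega
  have key : icosVal h.choose h.choose_spec.choose = (m : ℚ) := by
    rw [icosVal] at hm ⊢
    rw [(huv 0).1, (huv 1).1, (huv 2).1, (huv 0).2, (huv 1).2, (huv 2).2]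
    exact hm
  rw [key, round_intCast]

/-- Helper producing the coordinate condition for an explicit point. -/
lemma pt_coords (a b c : ℝ) (u1 u2 u3 v1 v2 v3 : ℤ)
    (h1 : a = (u1 + v1 * phi) / 2) (h2 : b = (u2 + v2 * phi) / 2)
    (h3 : c = (u3 + v3 * phi) / 2) :
    ∀ i, (pt a b c) i = ((![u1, u2, u3] : Fin 3 → ℤ) i + (![v1, v2, v3] : Fin 3 → ℤ) i * phi) / 2 := by
  intro i
  fin_cases i <;> simpa [pt] using ‹_›

/-- Every point of `ICOS` has integer `(u,v)` coordinates with `icosVal` value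
an integer in `{-4,…,-1,1,…,4}`. -/
lemma icos_master : ∀ p ∈ ICOS, ∃ u v : Fin 3 → ℤ, ∃ m : ℤ,
    (∀ i, p i = (u i + v i * phi) / 2) ∧ icosVal u v = m ∧
    m ∈ ({-4, -3, -2, -1, 1, 2, 3, 4} : Set ℤ) := by
  intro p hp
  rcases hp with ⟨s, hs, rfl | rfl | rfl⟩ |
    ⟨s1, hs1, s2, hs2, s3, hs3, rfl | rfl | rfl⟩ <;>
    simp only [Set.mem_insert_iff, Set.mem_singleton_iff] at * <;>
    [rcases hs with rfl | rfl; rcases hs with rfl | rfl; rcases hs with rfl | rfl;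
     (rcases hs1 with rfl | rfl <;> rcases hs2 with rfl | rfl <;> rcases hs3 with rfl | rfl);
     (rcases hs1 with rfl | rfl <;> rcases hs2 with rfl | rfl <;> rcases hs3 with rfl | rfl);
     (rcases hs1 with rfl | rfl <;> rcases hs2 with rfl | rfl <;> rcases hs3 with rfl | rfl)] <;>
    [ -- pt 0 0 s
      exact ⟨_, _, 2, pt_coords _ _ _ 0 0 2 0 0 0 (by ring) (by ring) (by push_cast; ring),
        by norm_num [icosVal, Matrix.cons_val_two], by norm_num⟩;
      exact ⟨_, _, -2, pt_coords _ _ _ 0 0 (-2) 0 0 0 (by ring) (by ring) (by push_cast; ring),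
        by norm_num [icosVal, Matrix.cons_val_two], by norm_num⟩;
      -- pt 0 s 0
      exact ⟨_, _, 4, pt_coords _ _ _ 0 2 0 0 0 0 (by ring) (by push_cast; ring) (by ring),
        by norm_num [icosVal, Matrix.cons_val_two], by norm_num⟩;
      exact ⟨_, _, -4, pt_coords _ _ _ 0 (-2) 0 0 0 0 (by ring) (by push_cast; ring) (by ring),
        by norm_num [icosVal, Matrix.cons_val_two], by norm_num⟩;
      -- pt s 0 0
      exact ⟨_, _, 4, pt_coords _ _ _ 2 0 0 0 0 0 (by push_cast; ring) (by ring) (by ring),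
        by norm_num [icosVal, Matrix.cons_val_two], by norm_num⟩;
      exact ⟨_, _, -4, pt_coords _ _ _ (-2) 0 0 0 0 0 (by push_cast; ring) (by ring) (by ring),
        by norm_num [icosVal, Matrix.cons_val_two], by norm_num⟩;
      -- B1: pt (s1*((phi-1)/2)) (s2*(1/2)) (s3*(phi/2)); u=(-s1,s2,0), v=(s1,0,s3)
      -- m = -s1/2 + 2 s2 + s3/2
      exact ⟨_, _, 2, pt_coords _ _ _ (-1) 1 0 1 0 1 (by push_cast; ring) (by push_cast; ring)
        (by push_cast; ring), by norm_num [icosVal, Matrix.cons_val_two], by norm_num⟩;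
      exact ⟨_, _, 1, pt_coords _ _ _ (-1) 1 0 1 0 (-1) (by push_cast; ring) (by push_cast; ring)
        (by push_cast; ring), by norm_num [icosVal, Matrix.cons_val_two], by norm_num⟩;
      exact ⟨_, _, -2, pt_coords _ _ _ (-1) (-1) 0 1 0 1 (by push_cast; ring) (by push_cast; ring)
        (by push_cast; ring), by norm_num [icosVal, Matrix.cons_val_two], by norm_num⟩;
      exact ⟨_, _, -3, pt_coords _ _ _ (-1) (-1) 0 1 0 (-1) (by push_cast; ring) (by push_cast; ring)
        (by push_cast; ring), by norm_num [icosVal, Matrix.cons_val_two], by norm_num⟩;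
      exact ⟨_, _, 3, pt_coords _ _ _ 1 1 0 (-1) 0 1 (by push_cast; ring) (by push_cast; ring)
        (by push_cast; ring), by norm_num [icosVal, Matrix.cons_val_two], by norm_num⟩;
      exact ⟨_, _, 2, pt_coords _ _ _ 1 1 0 (-1) 0 (-1) (by push_cast; ring) (by push_cast; ring)
        (by push_cast; ring), by norm_num [icosVal, Matrix.cons_val_two], by norm_num⟩;
      exact ⟨_, _, -1, pt_coords _ _ _ 1 (-1) 0 (-1) 0 1 (by push_cast; ring) (by push_cast; ring)
        (by push_cast; ring), by norm_num [icosVal, Matrix.cons_val_two], by norm_num⟩;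
      exact ⟨_, _, -2, pt_coords _ _ _ 1 (-1) 0 (-1) 0 (-1) (by push_cast; ring) (by push_cast; ring)
        (by push_cast; ring), by norm_num [icosVal, Matrix.cons_val_two], by norm_num⟩;
      -- B2: pt (s2/2) (s3 φ/2) (s1(φ-1)/2); u=(s2,0,-s1), v=(0,s3,s1)
      -- m = -s1/2 + 2 s2 + s3/2
      exact ⟨_, _, 2, pt_coords _ _ _ 1 0 (-1) 0 1 1 (by push_cast; ring) (by push_cast; ring)
        (by push_cast; ring), by norm_num [icosVal, Matrix.cons_val_two], by norm_num⟩;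
      exact ⟨_, _, 1, pt_coords _ _ _ 1 0 (-1) 0 (-1) 1 (by push_cast; ring) (by push_cast; ring)
        (by push_cast; ring), by norm_num [icosVal, Matrix.cons_val_two], by norm_num⟩;
      exact ⟨_, _, -2, pt_coords _ _ _ (-1) 0 (-1) 0 1 1 (by push_cast; ring) (by push_cast; ring)
        (by push_cast; ring), by norm_num [icosVal, Matrix.cons_val_two], by norm_num⟩;
      exact ⟨_, _, -3, pt_coords _ _ _ (-1) 0 (-1) 0 (-1) 1 (by push_cast; ring) (by push_cast; ring)
        (by push_cast; ring), by norm_num [icosVal, Matrix.cons_val_two], by norm_num⟩;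
      exact ⟨_, _, 3, pt_coords _ _ _ 1 0 1 0 1 (-1) (by push_cast; ring) (by push_cast; ring)
        (by push_cast; ring), by norm_num [icosVal, Matrix.cons_val_two], by norm_num⟩;
      exact ⟨_, _, 2, pt_coords _ _ _ 1 0 1 0 (-1) (-1) (by push_cast; ring) (by push_cast; ring)
        (by push_cast; ring), by norm_num [icosVal, Matrix.cons_val_two], by norm_num⟩;
      exact ⟨_, _, -1, pt_coords _ _ _ (-1) 0 1 0 1 (-1) (by push_cast; ring) (by push_cast; ring)
        (by push_cast; ring), by norm_num [icosVal, Matrix.cons_val_two], by norm_num⟩;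
      exact ⟨_, _, -2, pt_coords _ _ _ (-1) 0 1 0 (-1) (-1) (by push_cast; ring) (by push_cast; ring)
        (by push_cast; ring), by norm_num [icosVal, Matrix.cons_val_two], by norm_num⟩;
      -- B3: pt (s3 φ/2) (s1 (φ-1)/2) (s2/2); u=(0,-s1,s2), v=(s3,s1,0)
      -- m = -3 s1/2 + s2 + 3 s3/2
      exact ⟨_, _, 1, pt_coords _ _ _ 0 (-1) 1 1 1 0 (by push_cast; ring) (by push_cast; ring)
        (by push_cast; ring), by norm_num [icosVal, Matrix.cons_val_two], by norm_num⟩;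
      exact ⟨_, _, -2, pt_coords _ _ _ 0 (-1) 1 (-1) 1 0 (by push_cast; ring) (by push_cast; ring)
        (by push_cast; ring), by norm_num [icosVal, Matrix.cons_val_two], by norm_num⟩;
      exact ⟨_, _, -1, pt_coords _ _ _ 0 (-1) (-1) 1 1 0 (by push_cast; ring) (by push_cast; ring)
        (by push_cast; ring), by norm_num [icosVal, Matrix.cons_val_two], by norm_num⟩;
      exact ⟨_, _, -4, pt_coords _ _ _ 0 (-1) (-1) (-1) 1 0 (by push_cast; ring) (by push_cast; ring)
        (by push_cast; ring), by norm_num [icosVal, Matrix.cons_val_two], by norm_num⟩;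
      exact ⟨_, _, 4, pt_coords _ _ _ 0 1 1 1 (-1) 0 (by push_cast; ring) (by push_cast; ring)
        (by push_cast; ring), by norm_num [icosVal, Matrix.cons_val_two], by norm_num⟩;
      exact ⟨_, _, 1, pt_coords _ _ _ 0 1 1 (-1) (-1) 0 (by push_cast; ring) (by push_cast; ring)
        (by push_cast; ring), by norm_num [icosVal, Matrix.cons_val_two], by norm_num⟩;
      exact ⟨_, _, 2, pt_coords _ _ _ 0 1 (-1) 1 (-1) 0 (by push_cast; ring) (by push_cast; ring)
        (by push_cast; ring), by norm_num [icosVal, Matrix.cons_val_two], by norm_num⟩;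
      exact ⟨_, _, -1, pt_coords _ _ _ 0 1 (-1) (-1) (-1) 0 (by push_cast; ring) (by push_cast; ring)
        (by push_cast; ring), by norm_num [icosVal, Matrix.cons_val_two], by norm_num⟩]

/-- The icosidodecahedron configuration admits a nowhere-zero 5-flow labeling:
a map to `{-4,...,-1,1,...,4}` that is odd under the antipodal map and sums to
zero on every zero-sum triple. -/
theorem icos_admits_nz5_flow :
    ∃ q : EuclideanSpace ℝ (Fin 3) → ℤ,
      (∀ p ∈ ICOS, q p ∈ ({-4, -3, -2, -1, 1, 2, 3, 4} : Set ℤ)) ∧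
      (∀ p ∈ ICOS, q (-p) = -q p) ∧
      (∀ a ∈ ICOS, ∀ b ∈ ICOS, ∀ c ∈ ICOS, a + b + c = 0 → q a + q b + q c = 0) := by
  refine ⟨icosQ, ?_, ?_, ?_⟩
  · intro p hp
    obtain ⟨u, v, m, hc, hv, hmem⟩ := icos_master p hp
    rw [icosQ_eq p u v m hc hv]
    exact hmem
  · intro p hp
    obtain ⟨u, v, m, hc, hv, _⟩ := icos_master p hp
    have hc' : ∀ i, (-p) i = ((fun i => -u i) i + (fun i => -v i) i * phi) / 2 := by
      intro i
      have : (-p) i = -(p i) := rfl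
      rw [this, hc i]
      push_cast
      ring
    have hv' : icosVal (fun i => -u i) (fun i => -v i) = (-m : ℤ) := by
      simp only [icosVal] at hv ⊢
      push_cast at hv ⊢
      linarith
    rw [icosQ_eq (-p) _ _ (-m) hc' hv', icosQ_eq p u v m hc hv]
  · intro a ha b hb c hc habc
    obtain ⟨ua, va, ma, hca, hva, _⟩ := icos_master a ha
    obtain ⟨ub, vb, mb, hcb, hvb, _⟩ := icos_master b hb
    obtain ⟨uc, vc, mc, hcc, hvc, _⟩ := icos_master c hc
    have hsum : ∀ i, ua i + ub i + uc i = 0 ∧ va i + vb i + vc i = 0 := by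
      intro i
      have h0 : a i + b i + c i = 0 := by
        have := congrArg (fun x => x i) habc
        simpa using this
      rw [hca i, hcb i, hcc i] at h0
      have : ((ua i + ub i + uc i : ℤ) : ℝ) + ((va i + vb i + vc i : ℤ) : ℝ) * phi = 0 := by
        push_cast
        linarith
      have := phi_indep _ _ this
      omega
    rw [icosQ_eq a ua va ma hca hva, icosQ_eq b ub vb mb hcb hvb,
      icosQ_eq c uc vc mc hcc hvc]
    have h0 := hsum 0
    have h1 := hsum 1
    have h2 := hsum 2
    have : (ma : ℚ) + mb + mc = 0 := by
      rw [← hva, ← hvb, ← hvc]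
      simp only [icosVal]
      have c0 := h0.1; have c0' := h0.2
      have c1 := h1.1; have c1' := h1.2
      have c2 := h2.1; have c2' := h2.2
      have q0 : ((ua 0 : ℚ)) + ub 0 + uc 0 = 0 := by exact_mod_cast c0
      have q0' : ((va 0 : ℚ)) + vb 0 + vc 0 = 0 := by exact_mod_cast c0'
      have q1 : ((ua 1 : ℚ)) + ub 1 + uc 1 = 0 := by exact_mod_cast c1
      have q1' : ((va 1 : ℚ)) + vb 1 + vc 1 = 0 := by exact_mod_cast c1'
      have q2 : ((ua 2 : ℚ)) + ub 2 + uc 2 = 0 := by exact_mod_cast c2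
      have q2' : ((va 2 : ℚ)) + vb 2 + vc 2 = 0 := by exact_mod_cast c2'
      linarith
    exact_mod_cast this
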